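/- Let f^N_{s,t} : B^N_t → B^N_s (s ≤ t in the dyadic grid) be a generalized filtration on the binomial model. Then for all s ≤ t in the grid, e_s ∘ f^N_{s,t} = f̃^N_{s,t} ∘ e_t as functions B^N_t → B̃^N_s (naturality of the experienced-path maps). -/
import Mathlib


abbrev BB (n : ℕ) : Type := Fin n → Bool

def full {m n : ℕ} (h : m ≤ n) (ω : BB n) : BB m := fun i => ω (Fin.castLE h i)

def drop {m n : ℕ} (h : m ≤ n) (ω : BB n) : BB m :=
  fun i => if (i : ℕ) + 1 = m then false else ω (Fin.castLE h i)

open Classical in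
noncomputable def msr {α : Type*} [Fintype α] (w : α → ℝ) (A : Set α) : ℝ :=
  ∑ ω : α, if ω ∈ A then w ω else 0

def NullPres {α β : Type*} [Fintype α] [Fintype β]
    (f : α → β) (wa : α → ℝ) (wb : β → ℝ) : Prop :=
  ∀ A : Set β, msr wb A = 0 → msr wa (f ⁻¹' A) = 0

noncomputable def wP (p : ℕ → ℝ) (n : ℕ) (ω : BB n) : ℝ :=
  ∏ i : Fin n, if ω i then p ((i : ℕ) + 1) else 1 - p ((i : ℕ) + 1)

noncomputable def xi {n : ℕ} (ω : BB (n + 1)) : ℝ :=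
  2 * (if ω (Fin.last n) then (1 : ℝ) else 0) - 1

def IsCondExp {α β : Type*} [Fintype α] [Fintype β]
    (wa : α → ℝ) (wb : β → ℝ) (f : α → β) (X : α → ℝ) (Y : β → ℝ) : Prop :=
  ∀ A : Set β,
    msr (fun b => Y b * wb b) A = msr (fun a => X a * wa a) (f ⁻¹' A)

/-- The experienced path map `e_t : B^N_t → B^N_t`, `e_t(ω)(s) := f^N_{s,t}(ω)(s)`. -/
def expPath (F : ∀ ⦃m n : ℕ⦄, m ≤ n → BB n → BB m) {n : ℕ} (ω : BB n) : BB n :=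
  fun i => F (Nat.succ_le_of_lt i.isLt) ω (Fin.last (i : ℕ))

/-- For a generalized filtration `f^N_{s,t}` on the binomial model, the
experienced-path maps are natural: `e_s ∘ f^N_{s,t} = f̃^N_{s,t} ∘ e_t` for all `s ≤ t`
(where `f̃^N_{s,t}` is the restriction of `full^N_{s,t}` to `B̃^N_t`, so on `e_t(B^N_t)`
it is given by `full^N_{s,t}`). -/
theorem experienced_path_natural
    (F : ∀ ⦃m n : ℕ⦄, m ≤ n → BB n → BB m)
    (hid : ∀ (n : ℕ) (ω : BB n), F (le_refl n) ω = ω)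
    (hcomp : ∀ {k m n : ℕ} (h1 : k ≤ m) (h2 : m ≤ n) (ω : BB n),
      F h1 (F h2 ω) = F (h1.trans h2) ω) :
    ∀ (m n : ℕ) (h : m ≤ n) (ω : BB n),
      expPath F (F h ω) = full h (expPath F ω) := by
  intro m n h ω
  funext i
  simp [expPath, full, hcomp]
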